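/- Let X₁, ..., Xₙ be independent random variables, F a countable class of measurable functions with values in [-1,1], and suppose sup_{f∈F} (1/n)∑ᵢ E[f²(Xᵢ)] ≤ σ². Let ε₁,...,εₙ be i.i.d. Rademacher variables independent of the Xᵢ and set Z̄(F) = sup_{f∈F} |∑ᵢ ε_i f(X_i)|. Then E[ sup_{f∈F} (1/n)∑ᵢ f²(X_i) ] ≤ σ² + 8·E[Z̄(F)]/n. -/

import Mathlib

open MeasureTheory ProbabilityTheory


set_option linter.unusedSectionVars false
set_option maxHeartbeats 2000000
noncomputable section
namespace Stmt15


noncomputable def χ (b : Bool) : ℝ := if b then 1 else -1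

lemma χ_true : χ true = 1 := rfl
lemma χ_false : χ false = -1 := rfl
lemma abs_χ (b : Bool) : |χ b| = 1 := by cases b <;> simp [χ]
lemma χ_not (b : Bool) : χ (!b) = - χ b := by cases b <;> simp [χ]

variable {ι : Type*} [Countable ι] [Nonempty ι]

lemma bdd_range {v : ι → ℝ} {C : ℝ} (h : ∀ i, v i ≤ C) : BddAbove (Set.range v) :=
  ⟨C, by rintro _ ⟨i, rfl⟩; exact h i⟩

lemma abs_ciSup_le {v : ι → ℝ} {C : ℝ} (h : ∀ i, |v i| ≤ C) : |⨆ i, v i| ≤ C := by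
  obtain ⟨i₀⟩ := ‹Nonempty ι›
  rw [abs_le]
  constructor
  · exact le_trans (neg_le_of_abs_le (h i₀)) (le_ciSup (bdd_range fun i => (abs_le.mp (h i)).2) i₀)
  · exact ciSup_le fun i => (abs_le.mp (h i)).2

lemma posmax_ineq {a b c d : ℝ} (hac : a ≤ max c d) (hbc : b ≤ max c d)
    (h : a + b ≤ c + d) : max a 0 + max b 0 ≤ max c 0 + max d 0 := by
  rcases le_total a 0 with ha | ha <;> rcases le_total b 0 with hb | hb <;>
    rcases le_total c d with hcd | hcd <;>
    simp_all [max_def] <;> split_ifs <;> linarith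

/-- The two-point contraction lemma with `F = max · 0`. -/
lemma two_point (S t u : ι → ℝ)
    (hb1 : BddAbove (Set.range fun i => S i + t i))
    (hb2 : BddAbove (Set.range fun i => S i - t i))
    (h1 : ∀ i j, |u i - u j| ≤ |t i - t j|)
    (h2 : ∀ i, |u i| ≤ |t i|) :
    max (⨆ i, S i + u i) 0 + max (⨆ i, S i - u i) 0
      ≤ max (⨆ i, S i + t i) 0 + max (⨆ i, S i - t i) 0 := by
  set c := ⨆ i, S i + t i with hc
  set d := ⨆ i, S i - t i with hd
  have hptc : ∀ i, S i + t i ≤ c := fun i => le_ciSup hb1 i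
  have hptd : ∀ i, S i - t i ≤ d := fun i => le_ciSup hb2 i
  have key : ∀ i, max (S i + t i) (S i - t i) ≤ max c d :=
    fun i => max_le_max (hptc i) (hptd i)
  have hu_le : ∀ i, S i + u i ≤ max c d := by
    intro i
    have : S i + u i ≤ S i + |t i| := by
      have h3 := le_abs_self (u i)
      have h4 := h2 i
      linarith
    calc S i + u i ≤ S i + |t i| := this
      _ = max (S i + t i) (S i - t i) := by
          rcases abs_cases (t i) with ⟨h4, h5⟩ | ⟨h4, h5⟩ <;> rw [h4] <;>
            [rw [max_eq_left (by linarith)]; rw [max_eq_right (by linarith)]] <;> ring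
      _ ≤ max c d := key i
  have hu_le' : ∀ i, S i - u i ≤ max c d := by
    intro i
    have : S i - u i ≤ S i + |t i| := by
      have := (abs_le.mp (h2 i)).1
      have h3 := le_abs_self (t i)
      have h4 := neg_abs_le (u i)
      linarith [neg_le_of_abs_le (h2 i)]
    calc S i - u i ≤ S i + |t i| := this
      _ = max (S i + t i) (S i - t i) := by
          rcases abs_cases (t i) with ⟨h4, h5⟩ | ⟨h4, h5⟩ <;> rw [h4] <;>
            [rw [max_eq_left (by linarith)]; rw [max_eq_right (by linarith)]] <;> ring
      _ ≤ max c d := key i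
  have hbu1 : BddAbove (Set.range fun i => S i + u i) := bdd_range hu_le
  have hbu2 : BddAbove (Set.range fun i => S i - u i) := bdd_range hu_le'
  have ha : (⨆ i, S i + u i) ≤ max c d := ciSup_le hu_le
  have hb : (⨆ i, S i - u i) ≤ max c d := ciSup_le hu_le'
  have hab : (⨆ i, S i + u i) + (⨆ i, S i - u i) ≤ c + d := by
    refine le_of_forall_pos_le_add fun δ hδ => ?_
    obtain ⟨i, hi⟩ := exists_lt_of_lt_ciSup
      (show (⨆ i, S i + u i) - δ / 2 < ⨆ i, S i + u i by linarith)
    obtain ⟨j, hj⟩ := exists_lt_of_lt_ciSup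
      (show (⨆ i, S i - u i) - δ / 2 < ⨆ i, S i - u i by linarith)
    have habs : |u i - u j| ≤ |t i - t j| := h1 i j
    have h5 := le_abs_self (u i - u j)
    rcases abs_cases (t i - t j) with ⟨h6, h7⟩ | ⟨h6, h7⟩
    · have : S i + u i + (S j - u j) ≤ (S i + t i) + (S j - t j) := by
        rw [h6] at habs; linarith
      linarith [hptc i, hptd j]
    · have : S i + u i + (S j - u j) ≤ (S j + t j) + (S i - t i) := by
        rw [h6] at habs; linarith
      linarith [hptc j, hptd i]
  exact posmax_ineq ha hb hab



variable {n : ℕ}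

/-- one coordinate replacement step -/
lemma step (a : ι → Fin n → ℝ) (ha : ∀ i k, |a i k| ≤ 1)
    (J : Finset (Fin n)) (j : Fin n) (hj : j ∉ J) :
    ∑ s : Fin n → Bool,
        max (⨆ i, ∑ k, χ (s k) * (if k ∈ insert j J then (a i k)^2/2 else a i k)) 0
      ≤ ∑ s : Fin n → Bool,
        max (⨆ i, ∑ k, χ (s k) * (if k ∈ J then (a i k)^2/2 else a i k)) 0 := by
  classical
  let e := Equiv.funSplitAt j Bool
  rw [← Equiv.sum_comp e.symm (fun s => max (⨆ i, ∑ k, χ (s k) * (if k ∈ insert j J then (a i k)^2/2 else a i k)) 0),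
      ← Equiv.sum_comp e.symm (fun s => max (⨆ i, ∑ k, χ (s k) * (if k ∈ J then (a i k)^2/2 else a i k)) 0),
      Fintype.sum_prod_type_right, Fintype.sum_prod_type_right]
  refine Finset.sum_le_sum fun r _ => ?_
  rw [Fintype.sum_bool, Fintype.sum_bool]
  set S : ι → ℝ := fun i => ∑ k ∈ Finset.univ.erase j,
      χ (e.symm (true, r) k) * (if k ∈ J then (a i k)^2/2 else a i k) with hS
  have hsymm : ∀ (b : Bool) (k : Fin n) (hk : k ≠ j), e.symm (b, r) k = r ⟨k, hk⟩ := by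
    intro b k hk
    simp [e, Equiv.funSplitAt, Equiv.piSplitAt, hk]
  have hsymmj : ∀ b : Bool, e.symm (b, r) j = b := by
    intro b; simp [e, Equiv.funSplitAt, Equiv.piSplitAt]
  have hsumJ : ∀ (b : Bool) (i : ι),
      (∑ k, χ (e.symm (b, r) k) * (if k ∈ J then (a i k)^2/2 else a i k))
        = S i + χ b * a i j := by
    intro b i
    rw [← Finset.sum_erase_add _ _ (Finset.mem_univ j), hsymmj, if_neg hj]
    congr 1
    refine Finset.sum_congr rfl fun k hk => ?_
    have hk' : k ≠ j := (Finset.mem_erase.mp hk).1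
    rw [hsymm b k hk', hsymm true k hk']
  have hsum' : ∀ (b : Bool) (i : ι),
      (∑ k, χ (e.symm (b, r) k) * (if k ∈ insert j J then (a i k)^2/2 else a i k))
        = S i + χ b * ((a i j)^2/2) := by
    intro b i
    rw [← Finset.sum_erase_add _ _ (Finset.mem_univ j), hsymmj,
        if_pos (Finset.mem_insert_self j J)]
    congr 1
    refine Finset.sum_congr rfl fun k hk => ?_
    have hk' : k ≠ j := (Finset.mem_erase.mp hk).1
    rw [hsymm b k hk', hsymm true k hk']
    congr 1
    exact if_congr (by simp [Finset.mem_insert, hk']) rfl rfl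
  have hSbound : ∀ i, |S i| ≤ n := by
    intro i
    refine le_trans (Finset.abs_sum_le_sum_abs _ _) ?_
    have hterm : ∀ k ∈ Finset.univ.erase j,
        |χ (e.symm (true, r) k) * (if k ∈ J then (a i k)^2/2 else a i k)| ≤ 1 := by
      intro k _
      rw [abs_mul]
      have h1 : |χ (e.symm (true, r) k)| = 1 := by cases (e.symm (true, r) k) <;> simp [χ]
      rw [h1, one_mul]
      split_ifs
      · rw [abs_div, abs_pow, sq_abs, abs_two]
        nlinarith [ha i k, abs_nonneg (a i k), sq_abs (a i k)]
      · exact ha i k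
    refine le_trans (Finset.sum_le_sum hterm) ?_
    rw [Finset.sum_const, nsmul_eq_mul, mul_one]
    exact_mod_cast le_trans (Finset.card_le_univ _) (le_of_eq (by simp))
  have hχt : χ true = 1 := rfl
  have hχf : χ false = -1 := rfl
  simp only [hsum', hsumJ, hχt, hχf, one_mul, neg_one_mul]
  have hb1 : BddAbove (Set.range fun i => S i + a i j) :=
    bdd_range (C := (n:ℝ)+1) fun i => by
      have h1 := hSbound i; have h2 := ha i j
      have h3 := le_abs_self (S i); have h4 := le_abs_self (a i j); linarith
  have hb2 : BddAbove (Set.range fun i => S i - a i j) :=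
    bdd_range (C := (n:ℝ)+1) fun i => by
      have h1 := hSbound i; have h2 := ha i j
      have h3 := le_abs_self (S i); have h4 := neg_abs_le (a i j); linarith
  have key := two_point S (fun i => a i j) (fun i => (a i j)^2/2) hb1 hb2
    (fun i i' => by
      have h1 := ha i j; have h2 := ha i' j
      have hfac : (a i j)^2/2 - (a i' j)^2/2 = (a i j - a i' j) * ((a i j + a i' j)/2) := by ring
      rw [hfac, abs_mul]
      have habs2 : |(a i j + a i' j)/2| ≤ 1 := by
        rw [abs_div, abs_two, div_le_one (by norm_num)]
        calc |a i j + a i' j| ≤ |a i j| + |a i' j| := abs_add_le _ _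
          _ ≤ 2 := by linarith
      calc |a i j - a i' j| * |(a i j + a i' j)/2|
          ≤ |a i j - a i' j| * 1 := mul_le_mul_of_nonneg_left habs2 (abs_nonneg _)
        _ = |a i j - a i' j| := mul_one _)
    (fun i => by
      have h1 := ha i j
      have h0 := abs_nonneg (a i j)
      have hs := sq_abs (a i j)
      show |(a i j)^2/2| ≤ |a i j|
      rw [abs_div, abs_pow, sq_abs, abs_two]
      nlinarith)
  simpa only [sub_eq_add_neg] using key

lemma contraction_sum (a : ι → Fin n → ℝ) (ha : ∀ i k, |a i k| ≤ 1) :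
    ∑ s : Fin n → Bool, max (⨆ i, ∑ k, χ (s k) * ((a i k)^2/2)) 0
      ≤ ∑ s : Fin n → Bool, max (⨆ i, ∑ k, χ (s k) * a i k) 0 := by
  classical
  have main : ∀ J : Finset (Fin n),
      ∑ s : Fin n → Bool, max (⨆ i, ∑ k, χ (s k) * (if k ∈ J then (a i k)^2/2 else a i k)) 0
        ≤ ∑ s : Fin n → Bool, max (⨆ i, ∑ k, χ (s k) * a i k) 0 := by
    intro J
    induction J using Finset.induction_on with
    | empty => simp
    | @insert j J hj ih => exact le_trans (step a ha J j hj) ih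
  have h := main Finset.univ
  simpa using h

lemma abs_sum_chi_le (h : ι → Fin n → ℝ) (hh : ∀ i k, |h i k| ≤ 1) (s : Fin n → Bool) (i : ι) :
    |∑ k, χ (s k) * h i k| ≤ n := by
  refine le_trans (Finset.abs_sum_le_sum_abs _ _) ?_
  have : ∀ k ∈ (Finset.univ : Finset (Fin n)), |χ (s k) * h i k| ≤ 1 := by
    intro k _
    rw [abs_mul]
    have h1 : |χ (s k)| = 1 := by cases (s k) <;> simp [χ]
    rw [h1, one_mul]; exact hh i k
  refine le_trans (Finset.sum_le_sum this) ?_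
  simp

lemma contraction_abs (a : ι → Fin n → ℝ) (ha : ∀ i k, |a i k| ≤ 1) :
    ∑ s : Fin n → Bool, ⨆ i, |∑ k, χ (s k) * (a i k)^2|
      ≤ 4 * ∑ s : Fin n → Bool, ⨆ i, |∑ k, χ (s k) * a i k| := by
  classical
  have hasq : ∀ i k, |(a i k)^2| ≤ 1 := fun i k => by
    rw [abs_pow, sq_abs]; nlinarith [ha i k, abs_nonneg (a i k), sq_abs (a i k)]
  -- step 1: pointwise bound by positive parts
  have step1 : ∀ s : Fin n → Bool,
      (⨆ i, |∑ k, χ (s k) * (a i k)^2|)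
        ≤ max (⨆ i, ∑ k, χ (s k) * (a i k)^2) 0
          + max (⨆ i, ∑ k, χ (s k) * (-((a i k)^2))) 0 := by
    intro s
    refine ciSup_le fun i => ?_
    have hb1 : BddAbove (Set.range fun i => ∑ k, χ (s k) * (a i k)^2) :=
      bdd_range (C := (n:ℝ)) fun i =>
        le_trans (le_abs_self _) (abs_sum_chi_le _ hasq s i)
    have hb2 : BddAbove (Set.range fun i => ∑ k, χ (s k) * (-((a i k)^2))) :=
      bdd_range (C := (n:ℝ)) fun i => by
        have : |∑ k, χ (s k) * (-((a i k)^2))| ≤ n :=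
          abs_sum_chi_le (fun i k => -((a i k)^2)) (fun i k => by rw [abs_neg]; exact hasq i k) s i
        exact le_trans (le_abs_self _) this
    rcases abs_cases (∑ k, χ (s k) * (a i k)^2) with ⟨he, _⟩ | ⟨he, _⟩
    · rw [he]
      have := le_ciSup hb1 i
      have h0 : (0:ℝ) ≤ max (⨆ i, ∑ k, χ (s k) * (-((a i k)^2))) 0 := le_max_right _ _
      calc (∑ k, χ (s k) * (a i k)^2) ≤ ⨆ i, ∑ k, χ (s k) * (a i k)^2 := le_ciSup hb1 i
        _ ≤ max (⨆ i, ∑ k, χ (s k) * (a i k)^2) 0 := le_max_left _ _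
        _ ≤ _ := le_add_of_nonneg_right h0
    · rw [he]
      have heq : -(∑ k, χ (s k) * (a i k)^2) = ∑ k, χ (s k) * (-((a i k)^2)) := by
        rw [← Finset.sum_neg_distrib]; exact Finset.sum_congr rfl fun k _ => by ring
      rw [heq]
      have h0 : (0:ℝ) ≤ max (⨆ i, ∑ k, χ (s k) * (a i k)^2) 0 := le_max_right _ _
      calc (∑ k, χ (s k) * (-((a i k)^2))) ≤ ⨆ i, ∑ k, χ (s k) * (-((a i k)^2)) := le_ciSup hb2 i
        _ ≤ max (⨆ i, ∑ k, χ (s k) * (-((a i k)^2))) 0 := le_max_left _ _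
        _ ≤ _ := le_add_of_nonneg_left h0
  -- step 2: the negated-sum term has the same total as the plain term
  have hinv : Function.Involutive (fun s : Fin n → Bool => fun k => !(s k)) := by
    intro s; funext k; simp
  have step2 : ∑ s : Fin n → Bool, max (⨆ i, ∑ k, χ (s k) * (-((a i k)^2))) 0
      = ∑ s : Fin n → Bool, max (⨆ i, ∑ k, χ (s k) * (a i k)^2) 0 := by
    rw [← Equiv.sum_comp (hinv.toPerm _)
      (fun s => max (⨆ i, ∑ k, χ (s k) * (a i k)^2) 0)]
    refine Finset.sum_congr rfl fun s _ => ?_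
    have : (fun i => ∑ k, χ ((hinv.toPerm _ s) k) * (a i k)^2)
        = fun i => ∑ k, χ (s k) * (-((a i k)^2)) := by
      funext i
      refine Finset.sum_congr rfl fun k _ => ?_
      have : χ (!(s k)) = - χ (s k) := by cases (s k) <;> simp [χ]
      show χ (!(s k)) * (a i k)^2 = _
      rw [this]; ring
    rw [this]
  -- step 3: factor 2 out
  have step3 : ∀ s : Fin n → Bool,
      max (⨆ i, ∑ k, χ (s k) * (a i k)^2) 0
        = 2 * max (⨆ i, ∑ k, χ (s k) * ((a i k)^2/2)) 0 := by
    intro s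
    have h1 : (fun i => ∑ k, χ (s k) * (a i k)^2)
        = fun i => 2 * ∑ k, χ (s k) * ((a i k)^2/2) := by
      funext i
      rw [Finset.mul_sum]
      exact Finset.sum_congr rfl fun k _ => by ring
    rw [h1, ← Real.mul_iSup_of_nonneg (by norm_num : (0:ℝ) ≤ 2),
        mul_max_of_nonneg _ _ (by norm_num : (0:ℝ) ≤ 2), mul_zero]
  -- step 4: positive part of linear sup is below sup of abs
  have step4 : ∀ s : Fin n → Bool,
      max (⨆ i, ∑ k, χ (s k) * a i k) 0 ≤ ⨆ i, |∑ k, χ (s k) * a i k| := by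
    intro s
    obtain ⟨i₀⟩ := ‹Nonempty ι›
    have hb : BddAbove (Set.range fun i => |∑ k, χ (s k) * a i k|) :=
      bdd_range (C := (n:ℝ)) fun i => abs_sum_chi_le a ha s i
    refine max_le (ciSup_le fun i => le_trans (le_abs_self _) (le_ciSup hb i)) ?_
    exact le_trans (abs_nonneg _) (le_ciSup hb i₀)
  calc ∑ s : Fin n → Bool, ⨆ i, |∑ k, χ (s k) * (a i k)^2|
      ≤ ∑ s : Fin n → Bool, (max (⨆ i, ∑ k, χ (s k) * (a i k)^2) 0
          + max (⨆ i, ∑ k, χ (s k) * (-((a i k)^2))) 0) :=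
        Finset.sum_le_sum fun s _ => step1 s
    _ = 2 * ∑ s : Fin n → Bool, max (⨆ i, ∑ k, χ (s k) * (a i k)^2) 0 := by
        rw [Finset.sum_add_distrib, step2]; ring
    _ = 4 * ∑ s : Fin n → Bool, max (⨆ i, ∑ k, χ (s k) * ((a i k)^2/2)) 0 := by
        simp_rw [step3]; rw [← Finset.mul_sum]; ring
    _ ≤ 4 * ∑ s : Fin n → Bool, max (⨆ i, ∑ k, χ (s k) * a i k) 0 := by
        have := contraction_sum a ha
        linarith
    _ ≤ 4 * ∑ s : Fin n → Bool, ⨆ i, |∑ k, χ (s k) * a i k| := by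
        have := Finset.sum_le_sum fun s (_ : s ∈ Finset.univ) => step4 s
        linarith




/-- uniform measure on Bool -/
noncomputable def bu : Measure Bool := (2:ENNReal)⁻¹ • Measure.dirac true + (2:ENNReal)⁻¹ • Measure.dirac false

lemma half_add_half : (1/2 : ENNReal) + 1/2 = 1 := by
  rw [ENNReal.div_add_div_same, one_add_one_eq_two, ENNReal.div_self] <;> norm_num

lemma inv_two_add : (2:ENNReal)⁻¹ + 2⁻¹ = 1 := by
  rw [← one_div, half_add_half]

instance : IsProbabilityMeasure bu := by
  constructor
  simp [bu]
  exact inv_two_add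

lemma bu_singleton (t : Bool) : bu {t} = (2:ENNReal)⁻¹ := by
  cases t <;> simp [bu, Measure.dirac_apply' _ (measurableSet_singleton _),
    Set.indicator_apply]

lemma law_pi {Ω 𝒳 : Type*} [MeasurableSpace Ω] [MeasurableSpace 𝒳]
    (μ : Measure Ω) [IsProbabilityMeasure μ] {n : ℕ} (X : Fin n → Ω → 𝒳)
    (hm : ∀ k, Measurable (X k))
    (h : iIndepFun X μ) :
    μ.map (fun ω k => X k ω) = Measure.pi (fun k => μ.map (X k)) := by
  haveI : ∀ k, IsProbabilityMeasure (μ.map (X k)) :=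
    fun k => Measure.isProbabilityMeasure_map (hm k).aemeasurable
  refine (Measure.pi_eq fun s hs => ?_).symm
  rw [Measure.map_apply (measurable_pi_lambda _ fun k => hm k) (MeasurableSet.univ_pi hs)]
  have hpre : (fun ω k => X k ω) ⁻¹' Set.univ.pi s = ⋂ k ∈ Finset.univ, X k ⁻¹' s k := by
    ext ω; simp [Set.mem_pi]
  rw [hpre, h.measure_inter_preimage_eq_mul Finset.univ (fun k _ => hs k)]
  exact Finset.prod_congr rfl fun k _ => (Measure.map_apply (hm k) (hs k)).symm

lemma map_pi_comp {A B : Type*} [MeasurableSpace A] [MeasurableSpace B] {n : ℕ}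
    (c : A → B) (hc : Measurable c) (m : Fin n → Measure A)
    [∀ k, IsProbabilityMeasure (m k)] :
    (Measure.pi m).map (fun s k => c (s k)) = Measure.pi fun k => (m k).map c := by
  haveI : ∀ k, IsProbabilityMeasure ((m k).map c) :=
    fun k => Measure.isProbabilityMeasure_map hc.aemeasurable
  refine (Measure.pi_eq fun s hs => ?_).symm
  have hmeas : Measurable (fun (z : Fin n → A) k => c (z k)) := by fun_prop
  rw [Measure.map_apply hmeas (MeasurableSet.univ_pi hs)]
  have hpre : (fun (z : Fin n → A) k => c (z k)) ⁻¹' Set.univ.pi s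
      = Set.univ.pi fun k => c ⁻¹' s k := by
    ext z; simp [Set.mem_pi]
  rw [hpre, Measure.pi_pi]
  exact Finset.prod_congr rfl fun k _ => (Measure.map_apply hc (hs k)).symm

lemma rademacher_law {Ω : Type*} [MeasurableSpace Ω] (μ : Measure Ω)
    [IsProbabilityMeasure μ] (e : Ω → ℝ) (hm : Measurable e)
    (h1 : μ {ω | e ω = 1} = 1/2) (h2 : μ {ω | e ω = -1} = 1/2) :
    μ.map e = bu.map χ := by
  have hχ : Measurable χ := measurable_of_countable χ
  have hmapb : bu.map χ = (2:ENNReal)⁻¹ • Measure.dirac (1:ℝ) + (2:ENNReal)⁻¹ • Measure.dirac (-1:ℝ) := by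
    rw [bu, Measure.map_add _ _ hχ, Measure.map_smul, Measure.map_smul,
      Measure.map_dirac' hχ, Measure.map_dirac' hχ]
    rfl
  rw [hmapb]
  classical
  ext A hA
  rw [Measure.map_apply hm hA]
  have hE1 : MeasurableSet {ω | e ω = 1} := hm (measurableSet_singleton 1)
  have hE2 : MeasurableSet {ω | e ω = -1} := hm (measurableSet_singleton (-1))
  have hdisj : Disjoint {ω | e ω = 1} {ω | e ω = -1} := by
    rw [Set.disjoint_left]; intro ω hω1 hω2
    simp only [Set.mem_setOf_eq] at hω1 hω2
    rw [hω1] at hω2; norm_num at hω2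
  have hnull : μ ({ω | e ω = 1} ∪ {ω | e ω = -1})ᶜ = 0 := by
    have hu : μ ({ω | e ω = 1} ∪ {ω | e ω = -1}) = 1 := by
      rw [measure_union hdisj hE2, h1, h2, half_add_half]
    exact (prob_compl_eq_zero_iff (hE1.union hE2)).mpr hu
  have hsplit : μ (e ⁻¹' A) = μ (e ⁻¹' A ∩ {ω | e ω = 1}) + μ (e ⁻¹' A ∩ {ω | e ω = -1}) := by
    have hd2 : Disjoint (e ⁻¹' A ∩ {ω | e ω = 1}) (e ⁻¹' A ∩ {ω | e ω = -1}) :=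
      hdisj.mono Set.inter_subset_right Set.inter_subset_right
    rw [← measure_inter_conull hnull, Set.inter_union_distrib_left,
      measure_union hd2 ((hm hA).inter hE2)]
  rw [hsplit]
  have hint1 : μ (e ⁻¹' A ∩ {ω | e ω = 1}) = if (1:ℝ) ∈ A then (2:ENNReal)⁻¹ else 0 := by
    split_ifs with hmem
    · rw [show e ⁻¹' A ∩ {ω | e ω = 1} = {ω | e ω = 1} from ?_]
      · rw [h1, one_div]
      · ext ω; simp only [Set.mem_inter_iff, Set.mem_preimage, Set.mem_setOf_eq]
        exact ⟨fun h => h.2, fun h => ⟨h ▸ hmem, h⟩⟩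
    · rw [show e ⁻¹' A ∩ {ω | e ω = 1} = ∅ from ?_]
      · simp
      · ext ω
        simp only [Set.mem_inter_iff, Set.mem_preimage, Set.mem_setOf_eq, Set.mem_empty_iff_false,
          iff_false, not_and]
        intro hA' h1'; exact hmem (h1' ▸ hA')
  have hint2 : μ (e ⁻¹' A ∩ {ω | e ω = -1}) = if (-1:ℝ) ∈ A then (2:ENNReal)⁻¹ else 0 := by
    split_ifs with hmem
    · rw [show e ⁻¹' A ∩ {ω | e ω = -1} = {ω | e ω = -1} from ?_]
      · rw [h2, one_div]
      · ext ω; simp only [Set.mem_inter_iff, Set.mem_preimage, Set.mem_setOf_eq]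
        exact ⟨fun h => h.2, fun h => ⟨h ▸ hmem, h⟩⟩
    · rw [show e ⁻¹' A ∩ {ω | e ω = -1} = ∅ from ?_]
      · simp
      · ext ω
        simp only [Set.mem_inter_iff, Set.mem_preimage, Set.mem_setOf_eq, Set.mem_empty_iff_false,
          iff_false, not_and]
        intro hA' h1'; exact hmem (h1' ▸ hA')
  rw [hint1, hint2]
  simp only [Measure.coe_add, Measure.coe_smul, Pi.add_apply, Pi.smul_apply, smul_eq_mul]
  rw [Measure.dirac_apply' _ hA, Measure.dirac_apply' _ hA]
  simp only [Set.indicator_apply, Set.mem_setOf_eq, Pi.one_apply]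
  split_ifs <;> simp

lemma map_eval_pi {n : ℕ} {𝒳 : Type*} [MeasurableSpace 𝒳] (ν : Fin n → Measure 𝒳)
    [∀ k, IsProbabilityMeasure (ν k)] (k : Fin n) :
    (Measure.pi ν).map (fun y => y k) = ν k := by
  classical
  ext A hA
  rw [Measure.map_apply (measurable_pi_apply k) hA]
  have hpre : (fun y : Fin n → 𝒳 => y k) ⁻¹' A
      = Set.univ.pi (Function.update (fun _ => Set.univ) k A) := by
    ext y
    simp only [Set.mem_preimage, Set.mem_pi, Set.mem_univ, true_implies]
    constructor
    · intro h j
      rcases eq_or_ne j k with rfl | hj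
      · simpa using h
      · simp [Function.update_apply, hj]
    · intro h
      have := h k
      simpa using this
  rw [hpre, Measure.pi_pi]
  rw [Finset.prod_eq_single k (fun j _ hj => by simp [Function.update_apply, hj])
    (fun h => absurd (Finset.mem_univ k) h)]
  simp

lemma measurePreserving_piMap {n : ℕ} {A B : Type*} [MeasurableSpace A] [MeasurableSpace B]
    (m : Fin n → Measure A) (m' : Fin n → Measure B)
    [∀ k, IsProbabilityMeasure (m k)] [∀ k, IsProbabilityMeasure (m' k)]
    (h : Fin n → A → B) (hm : ∀ k, Measurable (h k)) (hmap : ∀ k, (m k).map (h k) = m' k) :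
    MeasurePreserving (fun (z : Fin n → A) k => h k (z k))
      (Measure.pi m) (Measure.pi m') := by
  have hmeas : Measurable fun (z : Fin n → A) k => h k (z k) := by fun_prop
  refine ⟨hmeas, ?_⟩
  refine (Measure.pi_eq fun C hC => ?_).symm
  rw [Measure.map_apply hmeas (MeasurableSet.univ_pi hC)]
  have hpre : (fun (z : Fin n → A) k => h k (z k)) ⁻¹' Set.univ.pi C
      = Set.univ.pi fun k => h k ⁻¹' C k := by
    ext z; simp [Set.mem_pi]
  rw [hpre, Measure.pi_pi]
  exact Finset.prod_congr rfl fun k _ => by rw [← hmap k, Measure.map_apply (hm k) (hC k)]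

lemma tau_preserving {n : ℕ} {𝒳 : Type*} [MeasurableSpace 𝒳] (ν : Fin n → Measure 𝒳)
    [∀ k, IsProbabilityMeasure (ν k)] (s : Fin n → Bool) :
    MeasurePreserving (fun (z : Fin n → 𝒳 × 𝒳) k => if s k then z k else Prod.swap (z k))
      (Measure.pi fun k => (ν k).prod (ν k)) (Measure.pi fun k => (ν k).prod (ν k)) :=
  measurePreserving_piMap _ _ (fun k p => if s k then p else Prod.swap p)
    (fun k => by
      cases hsk : s k
      · simp only [hsk, if_false, Bool.false_eq_true]
        exact measurable_swap
      · simp only [hsk, if_true]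
        exact measurable_id)
    (fun k => by
      cases hsk : s k
      · simp only [hsk, Bool.false_eq_true, if_false]
        exact Measure.prod_swap
      · simp only [hsk, if_true]
        exact Measure.map_id)

lemma fst_preserving {n : ℕ} {𝒳 : Type*} [MeasurableSpace 𝒳] (ν : Fin n → Measure 𝒳)
    [∀ k, IsProbabilityMeasure (ν k)] :
    MeasurePreserving (fun (z : Fin n → 𝒳 × 𝒳) k => (z k).1)
      (Measure.pi fun k => (ν k).prod (ν k)) (Measure.pi ν) :=
  measurePreserving_piMap _ _ (fun _ (p : 𝒳 × 𝒳) => p.1) (fun _ => measurable_fst)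
    (fun k => by simp)

lemma snd_preserving {n : ℕ} {𝒳 : Type*} [MeasurableSpace 𝒳] (ν : Fin n → Measure 𝒳)
    [∀ k, IsProbabilityMeasure (ν k)] :
    MeasurePreserving (fun (z : Fin n → 𝒳 × 𝒳) k => (z k).2)
      (Measure.pi fun k => (ν k).prod (ν k)) (Measure.pi ν) :=
  measurePreserving_piMap _ _ (fun _ (p : 𝒳 × 𝒳) => p.2) (fun _ => measurable_snd)
    (fun k => by simp)

lemma integrable_of_bound {α : Type*} [MeasurableSpace α] (m : Measure α) [IsFiniteMeasure m]
    (F : α → ℝ) (hF : Measurable F) (C : ℝ) (h : ∀ a, |F a| ≤ C) : Integrable F m :=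
  (integrable_const C).mono' hF.aestronglyMeasurable
    (Filter.Eventually.of_forall fun a => by simpa [Real.norm_eq_abs] using h a)


end Stmt15
end

open Stmt15

/-- Symmetrization plus contraction: if `sup_f (1/n) ∑ᵢ E[f²(Xᵢ)] ≤ σ²` for a
countable class `F` of `[-1,1]`-valued functions, then
`E[sup_f (1/n) ∑ᵢ f²(Xᵢ)] ≤ σ² + 8 E[Z̄(F)]/n` where
`Z̄(F) = sup_f |∑ᵢ εᵢ f(Xᵢ)|`. -/
theorem stmt_15 {Ω 𝒳 : Type*} [MeasurableSpace Ω] [MeasurableSpace 𝒳]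
    (μ : Measure Ω) [IsProbabilityMeasure μ]
    (n : ℕ) (hn : 0 < n) (X : Fin n → Ω → 𝒳) (hXm : ∀ i, Measurable (X i))
    (hXindep : iIndepFun X μ)
    {ι : Type*} [Countable ι] [Nonempty ι]
    (f : ι → 𝒳 → ℝ) (hfm : ∀ i, Measurable (f i))
    (hfb : ∀ i x, f i x ∈ Set.Icc (-1:ℝ) 1)
    (σ : ℝ) (hσ : ∀ i, (1 / (n:ℝ)) * ∑ k, ∫ ω, (f i (X k ω)) ^ 2 ∂μ ≤ σ ^ 2)
    (ε : Fin n → Ω → ℝ) (hεm : ∀ k, Measurable (ε k))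
    (hεlaw : ∀ k, μ {ω | ε k ω = 1} = 1/2 ∧ μ {ω | ε k ω = -1} = 1/2)
    (hεindep : iIndepFun ε μ)
    (hεX : IndepFun (fun ω k => ε k ω) (fun ω k => X k ω) μ) :
    ∫ ω, (⨆ i, (1 / (n:ℝ)) * ∑ k, (f i (X k ω)) ^ 2) ∂μ
      ≤ σ ^ 2 + 8 * (∫ ω, (⨆ i, |∑ k, ε k ω * f i (X k ω)|) ∂μ) / n := by
  classical
  haveI hprob : ∀ k, IsProbabilityMeasure (μ.map (X k)) :=
    fun k => Measure.isProbabilityMeasure_map (hXm k).aemeasurable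
  set ν : Fin n → Measure 𝒳 := fun k => μ.map (X k) with hν
  set νπ : Measure (Fin n → 𝒳) := Measure.pi ν with hνπ
  set π2 : Measure (Fin n → 𝒳 × 𝒳) := Measure.pi (fun k => (ν k).prod (ν k)) with hπ2
  haveI : IsProbabilityMeasure νπ := Measure.pi.instIsProbabilityMeasure _
  haveI : IsProbabilityMeasure π2 := Measure.pi.instIsProbabilityMeasure _
  have hnR : (0:ℝ) < n := by exact_mod_cast hn
  have hfabs : ∀ i x, |f i x| ≤ 1 := fun i x => abs_le.mpr ⟨(hfb i x).1, (hfb i x).2⟩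
  have hsq0 : ∀ i x, 0 ≤ (f i x)^2 := fun i x => sq_nonneg _
  have hsq1 : ∀ i (x : 𝒳), (f i x)^2 ≤ 1 := fun i x => by
    nlinarith [hfabs i x, abs_nonneg (f i x), sq_abs (f i x)]
  have hsqabs : ∀ i (x : 𝒳), |(f i x)^2| ≤ 1 := fun i x => by
    rw [abs_of_nonneg (hsq0 i x)]; exact hsq1 i x
  have hsum_le : ∀ (v : Fin n → ℝ), (∀ k, v k ≤ 1) → ∑ k, v k ≤ n := fun v h => by
    calc ∑ k, v k ≤ ∑ _k : Fin n, (1:ℝ) := Finset.sum_le_sum fun k _ => h k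
      _ = n := by simp
  have habs_sum : ∀ (v : Fin n → ℝ), (∀ k, |v k| ≤ 1) → |∑ k, v k| ≤ n := fun v h => by
    refine le_trans (Finset.abs_sum_le_sum_abs _ _) ?_
    exact hsum_le _ h
  have habs_div : ∀ t : ℝ, |t| ≤ n → |(1/(n:ℝ)) * t| ≤ 1 := fun t ht => by
    rw [abs_mul, abs_of_pos (by positivity : (0:ℝ) < 1/(n:ℝ))]
    calc (1/(n:ℝ)) * |t| ≤ (1/(n:ℝ)) * n :=
          mul_le_mul_of_nonneg_left ht (by positivity)
      _ = 1 := by field_simp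
  -- the mean values
  set mE : ι → Fin n → ℝ := fun i k => ∫ ω, (f i (X k ω))^2 ∂μ with hmE
  have hmE01 : ∀ i k, 0 ≤ mE i k ∧ mE i k ≤ 1 := by
    intro i k
    have hint : Integrable (fun ω => (f i (X k ω))^2) μ :=
      integrable_of_bound μ _ (((hfm i).comp (hXm k)).pow_const 2) 1 (fun ω => hsqabs i _)
    refine ⟨integral_nonneg fun ω => sq_nonneg _, ?_⟩
    calc ∫ ω, (f i (X k ω))^2 ∂μ ≤ ∫ _ω, (1:ℝ) ∂μ :=
          integral_mono hint (integrable_const 1) (fun ω => hsq1 i _)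
      _ = 1 := by simp
  -- main functions
  set V : (Fin n → 𝒳) → ℝ := fun x => ⨆ i, (1/(n:ℝ)) * ∑ k, (f i (x k))^2 with hV
  set W : (Fin n → 𝒳) → ℝ :=
    fun x => ⨆ i, (1/(n:ℝ)) * ∑ k, ((f i (x k))^2 - mE i k) with hW
  set D : (Fin n → 𝒳 × 𝒳) → ℝ :=
    fun z => ⨆ i, (1/(n:ℝ)) * ∑ k, ((f i ((z k).1))^2 - (f i ((z k).2))^2) with hD
  set Ds : (Fin n → Bool) → (Fin n → 𝒳 × 𝒳) → ℝ :=
    fun s z => ⨆ i, (1/(n:ℝ)) * ∑ k, χ (s k) * ((f i ((z k).1))^2 - (f i ((z k).2))^2) with hDs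
  set SG1 : (Fin n → Bool) → (Fin n → 𝒳 × 𝒳) → ℝ :=
    fun s z => ⨆ i, |∑ k, χ (s k) * (f i ((z k).1))^2| with hSG1
  set SG2 : (Fin n → Bool) → (Fin n → 𝒳 × 𝒳) → ℝ :=
    fun s z => ⨆ i, |∑ k, χ (s k) * (f i ((z k).2))^2| with hSG2
  set SF : (Fin n → Bool) → (Fin n → 𝒳) → ℝ :=
    fun s x => ⨆ i, |∑ k, χ (s k) * f i (x k)| with hSF
  set w : ℝ := ((2:ℝ)⁻¹)^n with hw
  have hw0 : (0:ℝ) ≤ w := by positivity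
  have hχm : Measurable χ := measurable_of_countable χ
  have habsχ : ∀ b, |χ b| = 1 := fun b => by cases b <;> simp [χ]
  -- measurability
  have hVm : Measurable V := Measurable.iSup fun i =>
    measurable_const.mul (Finset.measurable_sum _ fun k _ =>
      ((hfm i).comp (measurable_pi_apply k)).pow_const 2)
  have hWm : Measurable W := Measurable.iSup fun i =>
    measurable_const.mul (Finset.measurable_sum _ fun k _ =>
      (((hfm i).comp (measurable_pi_apply k)).pow_const 2).sub measurable_const)
  have hDm : Measurable D := Measurable.iSup fun i =>
    measurable_const.mul (Finset.measurable_sum _ fun k _ =>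
      (((hfm i).comp ((measurable_pi_apply k).fst)).pow_const 2).sub
        (((hfm i).comp ((measurable_pi_apply k).snd)).pow_const 2))
  have hDsm : ∀ s, Measurable (Ds s) := fun s => Measurable.iSup fun i =>
    measurable_const.mul (Finset.measurable_sum _ fun k _ =>
      measurable_const.mul
        ((((hfm i).comp ((measurable_pi_apply k).fst)).pow_const 2).sub
          (((hfm i).comp ((measurable_pi_apply k).snd)).pow_const 2)))
  have hSG1m : ∀ s, Measurable (SG1 s) := fun s => Measurable.iSup fun i =>
    (Finset.measurable_sum _ fun k _ =>
      measurable_const.mul (((hfm i).comp ((measurable_pi_apply k).fst)).pow_const 2)).abs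
  have hSG2m : ∀ s, Measurable (SG2 s) := fun s => Measurable.iSup fun i =>
    (Finset.measurable_sum _ fun k _ =>
      measurable_const.mul (((hfm i).comp ((measurable_pi_apply k).snd)).pow_const 2)).abs
  have hSFm : ∀ s, Measurable (SF s) := fun s => Measurable.iSup fun i =>
    (Finset.measurable_sum _ fun k _ =>
      measurable_const.mul ((hfm i).comp (measurable_pi_apply k))).abs
  -- bounds
  have hVb : ∀ x, |V x| ≤ 1 := fun x => abs_ciSup_le fun i =>
    habs_div _ (habs_sum _ fun k => hsqabs i _)
  have hWb : ∀ x, |W x| ≤ 1 := fun x => abs_ciSup_le fun i =>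
    habs_div _ (habs_sum _ fun k => by
      have h1 := (hmE01 i k).1; have h2 := (hmE01 i k).2
      have h3 := hsq0 i (x k); have h4 := hsq1 i (x k)
      rw [abs_sub_le_iff]; constructor <;> linarith)
  have hDb : ∀ z, |D z| ≤ 1 := fun z => abs_ciSup_le fun i =>
    habs_div _ (habs_sum _ fun k => by
      have h1 := hsq0 i ((z k).1); have h2 := hsq1 i ((z k).1)
      have h3 := hsq0 i ((z k).2); have h4 := hsq1 i ((z k).2)
      rw [abs_sub_le_iff]; constructor <;> linarith)
  have hDsb : ∀ s z, |Ds s z| ≤ 1 := fun s z => abs_ciSup_le fun i =>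
    habs_div _ (habs_sum _ fun k => by
      rw [abs_mul, habsχ, one_mul]
      have h1 := hsq0 i ((z k).1); have h2 := hsq1 i ((z k).1)
      have h3 := hsq0 i ((z k).2); have h4 := hsq1 i ((z k).2)
      rw [abs_sub_le_iff]; constructor <;> linarith)
  have hSG1b : ∀ s z, |SG1 s z| ≤ n := fun s z => abs_ciSup_le fun i => by
    rw [abs_abs]
    exact abs_sum_chi_le (fun i k => (f i ((z k).1))^2) (fun i k => hsqabs i _) s i
  have hSG2b : ∀ s z, |SG2 s z| ≤ n := fun s z => abs_ciSup_le fun i => by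
    rw [abs_abs]
    exact abs_sum_chi_le (fun i k => (f i ((z k).2))^2) (fun i k => hsqabs i _) s i
  have hSFb : ∀ s x, |SF s x| ≤ n := fun s x => abs_ciSup_le fun i => by
    rw [abs_abs]
    exact abs_sum_chi_le (fun i k => f i (x k)) (fun i k => hfabs i _) s i
  -- integrability
  have hVint : Integrable V νπ := integrable_of_bound νπ V hVm 1 hVb
  have hWint : Integrable W νπ := integrable_of_bound νπ W hWm 1 hWb
  have hDint : Integrable D π2 := integrable_of_bound π2 D hDm 1 hDb
  have hDsint : ∀ s, Integrable (Ds s) π2 := fun s =>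
    integrable_of_bound π2 (Ds s) (hDsm s) 1 (hDsb s)
  have hSG1int : ∀ s, Integrable (SG1 s) π2 := fun s =>
    integrable_of_bound π2 (SG1 s) (hSG1m s) n (hSG1b s)
  have hSG2int : ∀ s, Integrable (SG2 s) π2 := fun s =>
    integrable_of_bound π2 (SG2 s) (hSG2m s) n (hSG2b s)
  have hSFint : ∀ s, Integrable (SF s) νπ := fun s =>
    integrable_of_bound νπ (SF s) (hSFm s) n (hSFb s)
  -- Step A : LHS as integral over νπ
  have hXt : Measurable (fun ω (k : Fin n) => X k ω) := measurable_pi_lambda _ hXm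
  have hXlaw : μ.map (fun ω k => X k ω) = νπ := law_pi μ X hXm hXindep
  have hA : ∫ ω, (⨆ i, (1/(n:ℝ)) * ∑ k, (f i (X k ω))^2) ∂μ = ∫ x, V x ∂νπ := by
    rw [← hXlaw, integral_map hXt.aemeasurable hVm.aestronglyMeasurable]
  -- Step B : RHS as weighted sum over sign vectors
  have hεt : Measurable (fun ω (k : Fin n) => ε k ω) := measurable_pi_lambda _ hεm
  have hεlaw' : μ.map (fun ω k => ε k ω) = Measure.pi (fun _ : Fin n => bu.map χ) := by
    rw [law_pi μ ε hεm hεindep]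
    have : (fun k : Fin n => μ.map (ε k)) = fun _ => bu.map χ :=
      funext fun k => rademacher_law μ (ε k) (hεm k) (hεlaw k).1 (hεlaw k).2
    rw [this]
  have hβmap : (Measure.pi fun _ : Fin n => bu).map (fun s k => χ (s k))
      = Measure.pi (fun _ : Fin n => bu.map χ) := map_pi_comp χ hχm _
  have hσmapm : Measurable (fun (s : Fin n → Bool) k => χ (s k)) :=
    measurable_pi_lambda _ fun k => hχm.comp (measurable_pi_apply k)
  have hjoint : μ.map (fun ω => ((fun k => ε k ω), (fun k => X k ω)))
      = ((Measure.pi fun _ : Fin n => bu).map (fun s k => χ (s k))).prod νπ := by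
    rw [hβmap, ← hXlaw, ← hεlaw']
    exact (indepFun_iff_map_prod_eq_prod_map_map hεt.aemeasurable hXt.aemeasurable).mp hεX
  set Z : (Fin n → ℝ) × (Fin n → 𝒳) → ℝ := fun p => ⨆ i, |∑ k, p.1 k * f i (p.2 k)| with hZ
  have hZm : Measurable Z := Measurable.iSup fun i =>
    (Finset.measurable_sum _ fun k _ =>
      ((measurable_pi_apply k).comp measurable_fst).mul
        ((hfm i).comp ((measurable_pi_apply k).comp measurable_snd))).abs
  have hpairm : Measurable (fun ω => ((fun k => ε k ω), (fun k => X k ω)) :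
      Ω → (Fin n → ℝ) × (Fin n → 𝒳)) := hεt.prodMk hXt
  have hB1 : ∫ ω, (⨆ i, |∑ k, ε k ω * f i (X k ω)|) ∂μ
      = ∫ p, Z p ∂(((Measure.pi fun _ : Fin n => bu).map (fun s k => χ (s k))).prod νπ) := by
    rw [← hjoint, integral_map hpairm.aemeasurable hZm.aestronglyMeasurable]
  have hprodmap : ((Measure.pi fun _ : Fin n => bu).map (fun s k => χ (s k))).prod νπ
      = ((Measure.pi fun _ : Fin n => bu).prod νπ).map
          (Prod.map (fun s k => χ (s k)) id) := by
    conv_lhs => rw [show νπ = νπ.map id from (Measure.map_id).symm]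
    exact Measure.map_prod_map _ _ hσmapm measurable_id
  have hB2 : ∫ p, Z p ∂(((Measure.pi fun _ : Fin n => bu).map (fun s k => χ (s k))).prod νπ)
      = ∫ q, SF q.1 q.2 ∂((Measure.pi fun _ : Fin n => bu).prod νπ) := by
    rw [hprodmap, integral_map (hσmapm.prodMap measurable_id).aemeasurable
      hZm.aestronglyMeasurable]
    rfl
  have hSFqm : Measurable (fun q : (Fin n → Bool) × (Fin n → 𝒳) => SF q.1 q.2) :=
    Measurable.iSup fun i =>
      (Finset.measurable_sum _ fun k _ =>
        (hχm.comp ((measurable_pi_apply k).comp measurable_fst)).mul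
          ((hfm i).comp ((measurable_pi_apply k).comp measurable_snd))).abs
  have hSFqint : Integrable (fun q : (Fin n → Bool) × (Fin n → 𝒳) => SF q.1 q.2)
      ((Measure.pi fun _ : Fin n => bu).prod νπ) :=
    integrable_of_bound _ _ hSFqm n (fun q => hSFb q.1 q.2)
  have hβs : ∀ s : Fin n → Bool, ((Measure.pi fun _ : Fin n => bu) {s}).toReal = w := by
    intro s
    have h1 : ({s} : Set (Fin n → Bool)) = Set.univ.pi (fun k => {s k}) := by
      ext t; simp [Set.mem_pi, funext_iff]
    rw [h1, Measure.pi_pi]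
    simp only [bu_singleton, Finset.prod_const, Finset.card_univ, Fintype.card_fin]
    rw [hw, ENNReal.toReal_pow]
    norm_num
  have hinnerint : Integrable (fun s => ∫ x, SF s x ∂νπ) (Measure.pi fun _ : Fin n => bu) :=
    integrable_of_bound _ _ (measurable_of_countable _) n (fun s => by
      refine le_trans ?_ (le_of_eq rfl)
      calc |∫ x, SF s x ∂νπ| ≤ ∫ x, |SF s x| ∂νπ := by
            simpa [Real.norm_eq_abs] using norm_integral_le_integral_norm (SF s) (μ := νπ)
        _ ≤ ∫ _x, (n:ℝ) ∂νπ := integral_mono (hSFint s).abs (integrable_const _)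
            (fun x => hSFb s x)
        _ = n := by simp)
  have hB3 : ∫ q, SF q.1 q.2 ∂((Measure.pi fun _ : Fin n => bu).prod νπ)
      = ∑ s : Fin n → Bool, w * ∫ x, SF s x ∂νπ := by
    rw [integral_prod _ hSFqint, integral_fintype hinnerint]
    exact Finset.sum_congr rfl fun s _ => by rw [smul_eq_mul, measureReal_def, hβs s]
  have hB : ∫ ω, (⨆ i, |∑ k, ε k ω * f i (X k ω)|) ∂μ
      = ∑ s : Fin n → Bool, w * ∫ x, SF s x ∂νπ := by
    rw [hB1, hB2, hB3]
  -- Step C1/C2 : centering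
  have hC1 : ∀ x, V x ≤ σ^2 + W x := by
    intro x
    refine ciSup_le fun i => ?_
    have hbW : BddAbove (Set.range fun i => (1/(n:ℝ)) * ∑ k, ((f i (x k))^2 - mE i k)) :=
      bdd_range (C := 1) fun i => le_trans (le_abs_self _)
        (habs_div _ (habs_sum _ fun k => by
          have h1 := (hmE01 i k).1; have h2 := (hmE01 i k).2
          have h3 := hsq0 i (x k); have h4 := hsq1 i (x k)
          rw [abs_sub_le_iff]; constructor <;> linarith))
    have hsplit : (1/(n:ℝ)) * ∑ k, (f i (x k))^2
        = (1/(n:ℝ)) * ∑ k, ((f i (x k))^2 - mE i k) + (1/(n:ℝ)) * ∑ k, mE i k := by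
      rw [← mul_add, ← Finset.sum_add_distrib]
      congr 1
      exact Finset.sum_congr rfl fun k _ => by ring
    rw [hsplit]
    have h1 : (1/(n:ℝ)) * ∑ k, ((f i (x k))^2 - mE i k) ≤ W x := le_ciSup hbW i
    have h2 : (1/(n:ℝ)) * ∑ k, mE i k ≤ σ^2 := hσ i
    linarith
  have hC2 : ∫ x, V x ∂νπ ≤ σ^2 + ∫ x, W x ∂νπ := by
    calc ∫ x, V x ∂νπ ≤ ∫ x, (σ^2 + W x) ∂νπ :=
          integral_mono hVint ((integrable_const _).add hWint) hC1
      _ = σ^2 + ∫ x, W x ∂νπ := by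
          rw [integral_add (integrable_const _) hWint, integral_const]
          simp
  -- Step C3 : symmetrized comparison
  have hmE_eq : ∀ i k, mE i k = ∫ y, (f i (y k))^2 ∂νπ := by
    intro i k
    have h1 : ∫ y, (f i (y k))^2 ∂νπ = ∫ t, (f i t)^2 ∂(ν k) := by
      rw [← map_eval_pi ν k,
        integral_map (measurable_pi_apply k).aemeasurable
          ((hfm i).pow_const 2).aestronglyMeasurable]
    rw [h1, hν]
    rw [integral_map (hXm k).aemeasurable ((hfm i).pow_const 2).aestronglyMeasurable]
  have hDyim : ∀ (x : Fin n → 𝒳) i, Measurable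
      (fun y : Fin n → 𝒳 => (1/(n:ℝ)) * ∑ k, ((f i (x k))^2 - (f i (y k))^2)) := fun x i =>
    measurable_const.mul (Finset.measurable_sum _ fun k _ =>
      measurable_const.sub (((hfm i).comp (measurable_pi_apply k)).pow_const 2))
  have hDym : ∀ x : Fin n → 𝒳, Measurable
      (fun y : Fin n → 𝒳 => ⨆ i, (1/(n:ℝ)) * ∑ k, ((f i (x k))^2 - (f i (y k))^2)) := fun x =>
    Measurable.iSup fun i => hDyim x i
  have hDyb : ∀ (x y : Fin n → 𝒳) i,
      |(1/(n:ℝ)) * ∑ k, ((f i (x k))^2 - (f i (y k))^2)| ≤ 1 := fun x y i =>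
    habs_div _ (habs_sum _ fun k => by
      have h1 := hsq0 i (x k); have h2 := hsq1 i (x k)
      have h3 := hsq0 i (y k); have h4 := hsq1 i (y k)
      rw [abs_sub_le_iff]; constructor <;> linarith)
  have hDyint : ∀ x : Fin n → 𝒳, Integrable
      (fun y : Fin n → 𝒳 => ⨆ i, (1/(n:ℝ)) * ∑ k, ((f i (x k))^2 - (f i (y k))^2)) νπ :=
    fun x => integrable_of_bound νπ _ (hDym x) 1
      (fun y => abs_ciSup_le fun i => hDyb x y i)
  have hC3 : ∀ x, W x ≤
      ∫ y, (⨆ i, (1/(n:ℝ)) * ∑ k, ((f i (x k))^2 - (f i (y k))^2)) ∂νπ := by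
    intro x
    refine ciSup_le fun i => ?_
    have hsq_int : ∀ k : Fin n, Integrable (fun y : Fin n → 𝒳 => (f i (y k))^2) νπ := fun k =>
      integrable_of_bound νπ (fun y : Fin n → 𝒳 => (f i (y k))^2)
        (((hfm i).comp (measurable_pi_apply k)).pow_const 2) 1 (fun y => hsqabs i _)
    have hterm_int : ∀ k : Fin n, Integrable
        (fun y : Fin n → 𝒳 => (f i (x k))^2 - (f i (y k))^2) νπ := fun k =>
      (integrable_const _).sub (hsq_int k)
    have key : (1/(n:ℝ)) * ∑ k, ((f i (x k))^2 - mE i k)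
        = ∫ y, (1/(n:ℝ)) * ∑ k, ((f i (x k))^2 - (f i (y k))^2) ∂νπ := by
      rw [integral_const_mul]
      congr 1
      rw [integral_finset_sum _ (fun k _ => hterm_int k)]
      refine Finset.sum_congr rfl fun k _ => ?_
      rw [integral_sub (integrable_const _) (hsq_int k), integral_const]
      rw [hmE_eq i k]
      simp
    rw [key]
    refine integral_mono (integrable_of_bound νπ _ (hDyim x i) 1 (fun y => hDyb x y i))
      (hDyint x) fun y => ?_
    exact le_ciSup (bdd_range (C := 1) fun i' =>
      le_trans (le_abs_self _) (hDyb x y i')) i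
  -- Step C4 : to the product measure
  set Dp : (Fin n → 𝒳) × (Fin n → 𝒳) → ℝ :=
    fun p => ⨆ i, (1/(n:ℝ)) * ∑ k, ((f i (p.1 k))^2 - (f i (p.2 k))^2) with hDp
  have hDpm : Measurable Dp := Measurable.iSup fun i =>
    measurable_const.mul (Finset.measurable_sum _ fun k _ =>
      (((hfm i).comp ((measurable_pi_apply k).comp measurable_fst)).pow_const 2).sub
        (((hfm i).comp ((measurable_pi_apply k).comp measurable_snd)).pow_const 2))
  have hDpint : Integrable Dp (νπ.prod νπ) :=
    integrable_of_bound _ Dp hDpm 1 (fun p => abs_ciSup_le fun i => hDyb p.1 p.2 i)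
  have hC4 : ∫ x, W x ∂νπ ≤ ∫ p, Dp p ∂(νπ.prod νπ) := by
    calc ∫ x, W x ∂νπ
        ≤ ∫ x, (∫ y, (⨆ i, (1/(n:ℝ)) * ∑ k, ((f i (x k))^2 - (f i (y k))^2)) ∂νπ) ∂νπ :=
          integral_mono hWint hDpint.integral_prod_left hC3
      _ = ∫ p, Dp p ∂(νπ.prod νπ) := integral_integral hDpint
  -- Step C5 : to the pi-of-products measure
  have hΦ := measurePreserving_arrowProdEquivProdArrow 𝒳 𝒳 (Fin n) ν ν
  have hC5 : ∫ p, Dp p ∂(νπ.prod νπ) = ∫ z, D z ∂π2 := by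
    rw [← hΦ.integral_comp (MeasurableEquiv.measurableEmbedding _) Dp]
    rfl
  -- Step C6 : sign flips
  have hC6 : ∀ s, ∫ z, D z ∂π2 = ∫ z, Ds s z ∂π2 := by
    intro s
    have hτ := tau_preserving ν s
    have hcomp : ∀ z, D ((fun z (k : Fin n) => if s k then z k else Prod.swap (z k)) z)
        = Ds s z := by
      intro z
      refine iSup_congr fun i => ?_
      congr 1
      refine Finset.sum_congr rfl fun k _ => ?_
      cases hsk : s k
      · simp only [hsk, Bool.false_eq_true, if_false, χ, Prod.fst_swap, Prod.snd_swap]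
        ring
      · simp [hsk, χ]
    calc ∫ z, D z ∂π2 = ∫ z, D z ∂(π2.map (fun z k => if s k then z k else Prod.swap (z k))) := by
          rw [hτ.map_eq]
      _ = ∫ z, D ((fun z (k : Fin n) => if s k then z k else Prod.swap (z k)) z) ∂π2 :=
          integral_map hτ.measurable.aemeasurable hDm.aestronglyMeasurable
      _ = ∫ z, Ds s z ∂π2 := by simp only [hcomp]
  have hsumw : ∑ _s : Fin n → Bool, w = 1 := by
    rw [Finset.sum_const, nsmul_eq_mul, Finset.card_univ, Fintype.card_fun,
      Fintype.card_bool, Fintype.card_fin, hw]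
    push_cast
    rw [← mul_pow]
    norm_num
  have hC6b : ∫ z, D z ∂π2 = ∑ s, w * ∫ z, Ds s z ∂π2 := by
    calc ∫ z, D z ∂π2 = (∑ _s : Fin n → Bool, w) * ∫ z, D z ∂π2 := by rw [hsumw, one_mul]
      _ = ∑ s : Fin n → Bool, w * ∫ z, D z ∂π2 := by rw [Finset.sum_mul]
      _ = ∑ s, w * ∫ z, Ds s z ∂π2 :=
          Finset.sum_congr rfl fun s _ => by rw [hC6 s]
  -- Step C7/C8 : split into the two one-sided Rademacher sums
  have hC7 : ∀ s z, Ds s z ≤ (1/(n:ℝ)) * (SG1 s z + SG2 s z) := by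
    intro s z
    refine ciSup_le fun i => ?_
    have h1 : (∑ k, χ (s k) * ((f i ((z k).1))^2 - (f i ((z k).2))^2))
        = (∑ k, χ (s k) * (f i ((z k).1))^2) - (∑ k, χ (s k) * (f i ((z k).2))^2) := by
      rw [← Finset.sum_sub_distrib]
      exact Finset.sum_congr rfl fun k _ => by ring
    have hb1 : |∑ k, χ (s k) * (f i ((z k).1))^2| ≤ SG1 s z := by
      show |∑ k, χ (s k) * (f i ((z k).1))^2|
        ≤ ⨆ i, |∑ k, χ (s k) * (f i ((z k).1))^2|
      exact le_ciSup (bdd_range (C := (n:ℝ)) fun i' =>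
        abs_sum_chi_le (fun i k => (f i ((z k).1))^2) (fun i k => hsqabs i _) s i') i
    have hb2 : |∑ k, χ (s k) * (f i ((z k).2))^2| ≤ SG2 s z := by
      show |∑ k, χ (s k) * (f i ((z k).2))^2|
        ≤ ⨆ i, |∑ k, χ (s k) * (f i ((z k).2))^2|
      exact le_ciSup (bdd_range (C := (n:ℝ)) fun i' =>
        abs_sum_chi_le (fun i k => (f i ((z k).2))^2) (fun i k => hsqabs i _) s i') i
    have habs : (∑ k, χ (s k) * (f i ((z k).1))^2) - (∑ k, χ (s k) * (f i ((z k).2))^2)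
        ≤ |∑ k, χ (s k) * (f i ((z k).1))^2| + |∑ k, χ (s k) * (f i ((z k).2))^2| := by
      have := le_abs_self (∑ k, χ (s k) * (f i ((z k).1))^2)
      have := neg_abs_le (∑ k, χ (s k) * (f i ((z k).2))^2)
      linarith
    calc (1/(n:ℝ)) * ∑ k, χ (s k) * ((f i ((z k).1))^2 - (f i ((z k).2))^2)
        = (1/(n:ℝ)) * ((∑ k, χ (s k) * (f i ((z k).1))^2)
            - (∑ k, χ (s k) * (f i ((z k).2))^2)) := by rw [h1]
      _ ≤ (1/(n:ℝ)) * (SG1 s z + SG2 s z) := by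
          refine mul_le_mul_of_nonneg_left ?_ (by positivity)
          linarith
  have hC8 : ∀ s, ∫ z, Ds s z ∂π2
      ≤ (1/(n:ℝ)) * (∫ z, SG1 s z ∂π2 + ∫ z, SG2 s z ∂π2) := by
    intro s
    calc ∫ z, Ds s z ∂π2 ≤ ∫ z, (1/(n:ℝ)) * (SG1 s z + SG2 s z) ∂π2 :=
          integral_mono (hDsint s) (((hSG1int s).add (hSG2int s)).const_mul _) (hC7 s)
      _ = (1/(n:ℝ)) * (∫ z, SG1 s z ∂π2 + ∫ z, SG2 s z ∂π2) := by
          rw [integral_const_mul, integral_add (hSG1int s) (hSG2int s)]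
  -- Step C9 : contraction
  have hSFfstm : ∀ s, Measurable (fun z : Fin n → 𝒳 × 𝒳 => SF s (fun k => (z k).1)) :=
    fun s => Measurable.iSup fun i =>
      (Finset.measurable_sum _ fun k _ =>
        measurable_const.mul ((hfm i).comp ((measurable_pi_apply k).fst))).abs
  have hSFsndm : ∀ s, Measurable (fun z : Fin n → 𝒳 × 𝒳 => SF s (fun k => (z k).2)) :=
    fun s => Measurable.iSup fun i =>
      (Finset.measurable_sum _ fun k _ =>
        measurable_const.mul ((hfm i).comp ((measurable_pi_apply k).snd))).abs
  have hSFfstint : ∀ s, Integrable (fun z : Fin n → 𝒳 × 𝒳 => SF s (fun k => (z k).1)) π2 :=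
    fun s => integrable_of_bound π2 _ (hSFfstm s) n (fun z => hSFb s _)
  have hSFsndint : ∀ s, Integrable (fun z : Fin n → 𝒳 × 𝒳 => SF s (fun k => (z k).2)) π2 :=
    fun s => integrable_of_bound π2 _ (hSFsndm s) n (fun z => hSFb s _)
  have hpush1 : ∀ s, ∫ z, SF s (fun k => (z k).1) ∂π2 = ∫ x, SF s x ∂νπ := fun s => by
    rw [show νπ = Measure.map (fun (z : Fin n → 𝒳 × 𝒳) k => (z k).1) π2 from
        ((fst_preserving ν).map_eq).symm,
      integral_map (fst_preserving ν).measurable.aemeasurable (hSFm s).aestronglyMeasurable]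
  have hpush2 : ∀ s, ∫ z, SF s (fun k => (z k).2) ∂π2 = ∫ x, SF s x ∂νπ := fun s => by
    rw [show νπ = Measure.map (fun (z : Fin n → 𝒳 × 𝒳) k => (z k).2) π2 from
        ((snd_preserving ν).map_eq).symm,
      integral_map (snd_preserving ν).measurable.aemeasurable (hSFm s).aestronglyMeasurable]
  have hcon1 : ∀ z : Fin n → 𝒳 × 𝒳, ∑ s : Fin n → Bool, SG1 s z
      ≤ 4 * ∑ s : Fin n → Bool, SF s (fun k => (z k).1) := fun z =>
    contraction_abs (fun i k => f i ((z k).1)) (fun i k => hfabs i _)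
  have hcon2 : ∀ z : Fin n → 𝒳 × 𝒳, ∑ s : Fin n → Bool, SG2 s z
      ≤ 4 * ∑ s : Fin n → Bool, SF s (fun k => (z k).2) := fun z =>
    contraction_abs (fun i k => f i ((z k).2)) (fun i k => hfabs i _)
  have hC9a : ∑ s : Fin n → Bool, ∫ z, SG1 s z ∂π2
      ≤ 4 * ∑ s : Fin n → Bool, ∫ x, SF s x ∂νπ := by
    rw [← integral_finset_sum _ (fun s _ => hSG1int s)]
    calc ∫ z, ∑ s : Fin n → Bool, SG1 s z ∂π2
        ≤ ∫ z, 4 * ∑ s : Fin n → Bool, SF s (fun k => (z k).1) ∂π2 :=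
          integral_mono (integrable_finset_sum _ (fun s _ => hSG1int s))
            ((integrable_finset_sum _ (fun s _ => hSFfstint s)).const_mul 4) hcon1
      _ = 4 * ∑ s : Fin n → Bool, ∫ x, SF s x ∂νπ := by
          rw [integral_const_mul, integral_finset_sum _ (fun s _ => hSFfstint s)]
          congr 1
          exact Finset.sum_congr rfl fun s _ => hpush1 s
  have hC9b : ∑ s : Fin n → Bool, ∫ z, SG2 s z ∂π2
      ≤ 4 * ∑ s : Fin n → Bool, ∫ x, SF s x ∂νπ := by
    rw [← integral_finset_sum _ (fun s _ => hSG2int s)]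
    calc ∫ z, ∑ s : Fin n → Bool, SG2 s z ∂π2
        ≤ ∫ z, 4 * ∑ s : Fin n → Bool, SF s (fun k => (z k).2) ∂π2 :=
          integral_mono (integrable_finset_sum _ (fun s _ => hSG2int s))
            ((integrable_finset_sum _ (fun s _ => hSFsndint s)).const_mul 4) hcon2
      _ = 4 * ∑ s : Fin n → Bool, ∫ x, SF s x ∂νπ := by
          rw [integral_const_mul, integral_finset_sum _ (fun s _ => hSFsndint s)]
          congr 1
          exact Finset.sum_congr rfl fun s _ => hpush2 s
  -- assemble
  have hfinal : ∫ z, D z ∂π2 ≤ (8 * w / n) * ∑ s : Fin n → Bool, ∫ x, SF s x ∂νπ := by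
    rw [hC6b]
    have step : ∑ s : Fin n → Bool, w * ∫ z, Ds s z ∂π2
        ≤ (w/(n:ℝ)) * ((∑ s : Fin n → Bool, ∫ z, SG1 s z ∂π2)
            + (∑ s : Fin n → Bool, ∫ z, SG2 s z ∂π2)) := by
      calc ∑ s : Fin n → Bool, w * ∫ z, Ds s z ∂π2
          ≤ ∑ s : Fin n → Bool, w * ((1/(n:ℝ)) * (∫ z, SG1 s z ∂π2 + ∫ z, SG2 s z ∂π2)) :=
            Finset.sum_le_sum fun s _ => mul_le_mul_of_nonneg_left (hC8 s) hw0
        _ = (w/(n:ℝ)) * ((∑ s : Fin n → Bool, ∫ z, SG1 s z ∂π2)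
              + (∑ s : Fin n → Bool, ∫ z, SG2 s z ∂π2)) := by
            rw [← Finset.sum_add_distrib, ← Finset.mul_sum]
            rw [Finset.mul_sum, Finset.mul_sum]
            refine Finset.sum_congr rfl fun s _ => ?_
            ring
    have hwn : (0:ℝ) ≤ w / n := by positivity
    calc ∑ s : Fin n → Bool, w * ∫ z, Ds s z ∂π2
        ≤ (w/(n:ℝ)) * ((∑ s : Fin n → Bool, ∫ z, SG1 s z ∂π2)
            + (∑ s : Fin n → Bool, ∫ z, SG2 s z ∂π2)) := step
      _ ≤ (w/(n:ℝ)) * (4 * (∑ s : Fin n → Bool, ∫ x, SF s x ∂νπ)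
            + 4 * (∑ s : Fin n → Bool, ∫ x, SF s x ∂νπ)) := by
          refine mul_le_mul_of_nonneg_left ?_ hwn
          linarith [hC9a, hC9b]
      _ = (8 * w / n) * ∑ s : Fin n → Bool, ∫ x, SF s x ∂νπ := by ring
  rw [hA, hB]
  have hchain : ∫ x, V x ∂νπ
      ≤ σ^2 + (8 * w / n) * ∑ s : Fin n → Bool, ∫ x, SF s x ∂νπ := by
    calc ∫ x, V x ∂νπ ≤ σ^2 + ∫ x, W x ∂νπ := hC2
      _ ≤ σ^2 + ∫ p, Dp p ∂(νπ.prod νπ) := by linarith [hC4]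
      _ = σ^2 + ∫ z, D z ∂π2 := by rw [hC5]
      _ ≤ σ^2 + (8 * w / n) * ∑ s : Fin n → Bool, ∫ x, SF s x ∂νπ := by linarith [hfinal]
  have heq : 8 * (∑ s : Fin n → Bool, w * ∫ x, SF s x ∂νπ) / n
      = (8 * w / n) * ∑ s : Fin n → Bool, ∫ x, SF s x ∂νπ := by
    rw [← Finset.mul_sum]
    ring
  rw [heq]
  exact hchain
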